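/- Let H ⊆ K be finite-dimensional Hilbert spaces with dim K ≥ |J| where J is a finite index set, and let {E_j : j ∈ J} be a rank-one POVM on H, i.e., E_j = |π_j⟩⟨π_j| with Σ_j E_j = Id_H and |J| = dim K. Then there exists an orthonormal basis {|v_j⟩ : j ∈ J} of K such that P|v_j⟩ = |π_j⟩ for all j, where P is the orthogonal projection from K onto H. -/

import Mathlib

open scoped BigOperators InnerProductSpace

/-- Naimark's dilation theorem for rank-one POVMs: a rank-one POVM
`{|π_j⟩⟨π_j| : j ∈ J}` on a subspace `H` of a Hilbert space `K` with `|J| = dim K`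
extends to a projective measurement given by an orthonormal basis `{|v_j⟩}` of `K`
with `P|v_j⟩ = |π_j⟩`, where `P` is the orthogonal projection onto `H`. -/
theorem naimark_rank_one {K : Type*} [NormedAddCommGroup K] [InnerProductSpace ℂ K]
    [FiniteDimensional ℂ K] (H : Submodule ℂ K) {J : Type*} [Fintype J]
    (π : J → H)
    (hpovm : ∀ x : H, ∑ j, ⟪π j, x⟫_ℂ • π j = x)
    (hcard : Fintype.card J = Module.finrank ℂ K) :
    ∃ v : J → K, Orthonormal ℂ v ∧ Submodule.span ℂ (Set.range v) = ⊤ ∧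
      ∀ j, H.orthogonalProjectionOnto (v j) = π j := by
  classical
  -- the map T : H → ℂ^J, x ↦ (⟪π_j, x⟫)_j
  have hJ : Fintype.card J = Module.finrank ℂ (EuclideanSpace ℂ J) := by
    simp
  let Tlin : H →ₗ[ℂ] EuclideanSpace ℂ J :=
    { toFun := fun x => WithLp.toLp 2 (fun j => ⟪π j, x⟫_ℂ)
      map_add' := fun x y => by ext j; simp [inner_add_right]
      map_smul' := fun c x => by ext j; simp [inner_smul_right] }
  have hT : ∀ x y : H, ⟪Tlin x, Tlin y⟫_ℂ = ⟪x, y⟫_ℂ := by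
    intro x y
    have : ⟪x, y⟫_ℂ = ⟪x, ∑ j, ⟪π j, y⟫_ℂ • π j⟫_ℂ := by rw [hpovm y]
    rw [this, inner_sum]
    rw [EuclideanSpace.inner_eq_star_dotProduct]
    simp [dotProduct, inner_smul_right, Tlin, mul_comm, inner_conj_symm]
  let T : H →ₗᵢ[ℂ] EuclideanSpace ℂ J := Tlin.isometryOfInner hT
  -- an orthonormal basis of K indexed by J
  let b : OrthonormalBasis J ℂ K :=
    (stdOrthonormalBasis ℂ K).reindex (Fintype.equivFinOfCardEq hcard).symm
  let φ : EuclideanSpace ℂ J ≃ₗᵢ[ℂ] K := b.repr.symm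
  -- isometry H → K, extend it
  let L : H →ₗᵢ[ℂ] K := φ.toLinearIsometry.comp T
  let U : K →ₗᵢ[ℂ] K := L.extend
  have hU : ∀ x : H, U (x : K) = φ (T x) := fun x => L.extend_apply x
  -- U is bijective
  have hUsurj : Function.Surjective U := by
    have hinj : Function.Injective U.toLinearMap := U.injective
    exact (LinearMap.injective_iff_surjective).mp hinj
  let Ue : K ≃ₗᵢ[ℂ] K := LinearIsometryEquiv.ofSurjective U hUsurj
  have hUe : ∀ x : K, Ue x = U x := fun x => rfl
  -- the desired vectors
  refine ⟨fun j => Ue.symm (b j), ?_, ?_, ?_⟩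
  · exact (b.orthonormal).comp_linearIsometryEquiv Ue.symm
  · have hr : (Set.range fun j => Ue.symm (b j)) = Set.range ⇑(b.map Ue.symm) := by
      ext x; simp [OrthonormalBasis.map_apply]
    rw [hr, ← OrthonormalBasis.coe_toBasis]
    exact (b.map Ue.symm).toBasis.span_eq
  · intro j
    ext
    show H.starProjection _ = ((π j : H) : K)
    apply Submodule.eq_starProjection_of_mem_of_inner_eq_zero (π j).2
    intro w hw
    rw [inner_sub_left, sub_eq_zero]
    have h1 : ⟪Ue.symm (b j), w⟫_ℂ = ⟪b j, Ue w⟫_ℂ := by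
      rw [← Ue.inner_map_map, Ue.apply_symm_apply]
    rw [h1, hUe, show w = ((⟨w, hw⟩ : H) : K) from rfl, hU]
    have h2 : ⟪b j, φ (T ⟨w, hw⟩)⟫_ℂ = b.repr (φ (T ⟨w, hw⟩)) j := by
      rw [b.repr_apply_apply]
    rw [h2]
    have h3 : b.repr (φ (T ⟨w, hw⟩)) = T ⟨w, hw⟩ := by
      simp [φ]
    rw [h3]
    exact (Submodule.coe_inner H (π j) ⟨w, hw⟩)
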